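/- Twisted cocommutativity holds: for any g, h ∈ G and any c ∈ 𝒞, the element Δ_{g,h}(c) is congruent to σ((1 ⊗ T_{h⁻¹gh}(h))(Δ_{h, h⁻¹gh}(c))) modulo the subspace 𝒞_g ⊗ 𝒞 + 𝒞 ⊗ 𝒞_h, where σ: 𝒞⊗𝒞 → 𝒞⊗𝒞 is the transposition x⊗y ↦ y⊗x. -/
import Mathlib

open scoped TensorProduct

noncomputable section

variable {K : Type*} [Field K] {G : Type*} [Group G]
  {A : Type*} [Ring A] [Algebra K A] {ι : Type*} [Fintype ι]

/-- The subspace `𝒞_h = span{c₁c₂ − c₂·h(c₁) | c₁, c₂ ∈ 𝒞}`. -/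
def commSub (ρ : G → A ≃ₐ[K] A) (h : G) : Submodule K A :=
  Submodule.span K {x | ∃ c₁ c₂ : A, x = c₁ * c₂ - c₂ * ρ h c₁}

/-- The map `T_h(g)(c) = c_e⁻¹ c_{g,g⁻¹}⁻¹ g(c) c_{g,h} c_{gh,g⁻¹}`. -/
def Tmap (ρ : G → A ≃ₐ[K] A) (u : G → G → Aˣ) (ue : Aˣ) (g h : G) (x : A) : A :=
  (↑(ue⁻¹) : A) * (↑((u g g⁻¹)⁻¹) : A) * ρ g x * (↑(u g h) : A) * (↑(u (g * h) g⁻¹) : A)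

/-- The twisted multiplication `m_{g,h}(c′⊗c″) = Σᵢ ξ′ᵢ c′ g(ξ″ᵢ c″) c_{g,h}`. -/
def mMul (ρ : G → A ≃ₐ[K] A) (u : G → G → Aˣ) (ξ₁ ξ₂ : ι → A) (g h : G)
    (c' c'' : A) : A :=
  ∑ i, ξ₁ i * c' * ρ g (ξ₂ i * c'') * (↑(u g h) : A)

/-- The twisted comultiplication `Δ_{g,h}(c) = Σᵢ c c_{g,h}⁻¹ g(ξ′ᵢ) ⊗ ξ″ᵢ`. -/
def ΔCom (ρ : G → A ≃ₐ[K] A) (u : G → G → Aˣ) (ξ₁ ξ₂ : ι → A) (g h : G)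
    (c : A) : A ⊗[K] A :=
  ∑ i, (c * (↑((u g h)⁻¹) : A) * ρ g (ξ₁ i)) ⊗ₜ[K] ξ₂ i

/-- The subspace `𝒞_g ⊗ 𝒞` of `𝒞 ⊗ 𝒞`. -/
def leftTensor (ρ : G → A ≃ₐ[K] A) (g : G) : Submodule K (A ⊗[K] A) :=
  Submodule.span K {z | ∃ x ∈ commSub ρ g, ∃ y : A, z = x ⊗ₜ[K] y}

/-- The subspace `𝒞 ⊗ 𝒞_h` of `𝒞 ⊗ 𝒞`. -/
def rightTensor (ρ : G → A ≃ₐ[K] A) (h : G) : Submodule K (A ⊗[K] A) :=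
  Submodule.span K {z | ∃ x : A, ∃ y ∈ commSub ρ h, z = x ⊗ₜ[K] y}

set_option linter.unusedSectionVars false in
private lemma expand2' (θ : A →ₗ[K] K) (ξ₁ ξ₂ : ι → A)
    (hξ : ∀ a : A, a = ∑ i, θ (a * ξ₂ i) • ξ₁ i)
    (hξsym : (∑ i, ξ₁ i ⊗ₜ[K] ξ₂ i) = ∑ i, ξ₂ i ⊗ₜ[K] ξ₁ i)
    (a : A) : a = ∑ i, θ (a * ξ₁ i) • ξ₂ i := by
  have h1 := congrArg
    (TensorProduct.lift ((LinearMap.lsmul K A).comp (θ.comp (LinearMap.mulLeft K a)))) hξsym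
  simp only [map_sum, TensorProduct.lift.tmul, LinearMap.comp_apply,
    LinearMap.mulLeft_apply, LinearMap.lsmul_apply] at h1
  exact (hξ a).trans h1.symm

set_option linter.unusedSectionVars false in
private lemma casimirC2' (θ : A →ₗ[K] K)
    (htr : ∀ a b : A, θ (a * b) = θ (b * a)) (ξ₁ ξ₂ : ι → A)
    (hξ : ∀ a : A, a = ∑ i, θ (a * ξ₂ i) • ξ₁ i)
    (hξsym : (∑ i, ξ₁ i ⊗ₜ[K] ξ₂ i) = ∑ i, ξ₂ i ⊗ₜ[K] ξ₁ i)
    (a : A) :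
    ∑ i, (ξ₁ i * a) ⊗ₜ[K] ξ₂ i = ∑ i, ξ₁ i ⊗ₜ[K] (a * ξ₂ i) := by
  calc ∑ i, (ξ₁ i * a) ⊗ₜ[K] ξ₂ i
      = ∑ i, (∑ j, θ (ξ₁ i * a * ξ₂ j) • ξ₁ j) ⊗ₜ[K] ξ₂ i := by
        refine Finset.sum_congr rfl fun i _ => ?_
        congr 1
        exact hξ (ξ₁ i * a)
    _ = ∑ j, ξ₁ j ⊗ₜ[K] (∑ i, θ (ξ₁ i * a * ξ₂ j) • ξ₂ i) := by
        simp only [TensorProduct.sum_tmul, TensorProduct.smul_tmul,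
          TensorProduct.tmul_sum, TensorProduct.tmul_smul]
        exact Finset.sum_comm
    _ = ∑ j, ξ₁ j ⊗ₜ[K] (a * ξ₂ j) := by
        refine Finset.sum_congr rfl fun j _ => ?_
        congr 1
        have hco : ∀ i, θ (ξ₁ i * a * ξ₂ j) = θ ((a * ξ₂ j) * ξ₁ i) := fun i => by
          rw [mul_assoc]; exact htr _ _
        simp only [hco]
        exact (expand2' θ ξ₁ ξ₂ hξ hξsym (a * ξ₂ j)).symm

set_option linter.unusedSectionVars false in
private lemma casimirC3' (ρ : G → A ≃ₐ[K] A) (θ : A →ₗ[K] K)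
    (htr : ∀ a b : A, θ (a * b) = θ (b * a))
    (hGinv : ∀ (g : G) (a : A), θ (ρ g a) = θ a) (ξ₁ ξ₂ : ι → A)
    (hξ : ∀ a : A, a = ∑ i, θ (a * ξ₂ i) • ξ₁ i)
    (hξsym : (∑ i, ξ₁ i ⊗ₜ[K] ξ₂ i) = ∑ i, ξ₂ i ⊗ₜ[K] ξ₁ i)
    (t : G) :
    ∑ i, ρ t (ξ₁ i) ⊗ₜ[K] ρ t (ξ₂ i) = ∑ i, ξ₁ i ⊗ₜ[K] ξ₂ i := by
  calc ∑ i, ρ t (ξ₁ i) ⊗ₜ[K] ρ t (ξ₂ i)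
      = ∑ i, (∑ j, θ (ρ t (ξ₁ i) * ξ₂ j) • ξ₁ j) ⊗ₜ[K] ρ t (ξ₂ i) := by
        refine Finset.sum_congr rfl fun i _ => ?_
        congr 1
        exact hξ (ρ t (ξ₁ i))
    _ = ∑ j, ξ₁ j ⊗ₜ[K] (∑ i, θ (ρ t (ξ₁ i) * ξ₂ j) • ρ t (ξ₂ i)) := by
        simp only [TensorProduct.sum_tmul, TensorProduct.smul_tmul,
          TensorProduct.tmul_sum, TensorProduct.tmul_smul]
        exact Finset.sum_comm
    _ = ∑ j, ξ₁ j ⊗ₜ[K] ξ₂ j := by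
        refine Finset.sum_congr rfl fun j _ => ?_
        congr 1
        have hco : ∀ i, θ (ρ t (ξ₁ i) * ξ₂ j) = θ ((ρ t).symm (ξ₂ j) * ξ₁ i) := fun i => by
          conv_lhs => rw [← (ρ t).apply_symm_apply (ξ₂ j), ← map_mul]
          rw [hGinv]
          exact htr _ _
        simp only [hco]
        calc ∑ i, θ ((ρ t).symm (ξ₂ j) * ξ₁ i) • ρ t (ξ₂ i)
            = ρ t (∑ i, θ ((ρ t).symm (ξ₂ j) * ξ₁ i) • ξ₂ i) := by
              rw [map_sum]
              exact Finset.sum_congr rfl fun i _ => (map_smul (ρ t) _ _).symm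
          _ = ρ t ((ρ t).symm (ξ₂ j)) := by
              rw [← expand2' θ ξ₁ ξ₂ hξ hξsym ((ρ t).symm (ξ₂ j))]
          _ = ξ₂ j := (ρ t).apply_symm_apply _

set_option linter.unusedSectionVars false in
private lemma gen_mem' (ρ : G → A ≃ₐ[K] A) (g : G) (a b : A) :
    a * b - b * ρ g a ∈ commSub ρ g :=
  Submodule.subset_span ⟨a, b, rfl⟩

private lemma gen_mem2' (ρ : G → A ≃ₐ[K] A) (g : G) (x : A) :
    ρ g x - x ∈ commSub ρ g := by
  have h1 := neg_mem (gen_mem' ρ g x 1)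
  simpa using h1

set_option linter.unusedSectionVars false in
private lemma mem_left' (ρ : G → A ≃ₐ[K] A) (g : G) {x : A} (hx : x ∈ commSub ρ g) (y : A) :
    x ⊗ₜ[K] y ∈ leftTensor ρ g :=
  Submodule.subset_span ⟨x, hx, y, rfl⟩

theorem ΔCom_twisted_cocomm
    [Fintype G] (ρ : G → A ≃ₐ[K] A) (u : G → G → Aˣ) (ue : Aˣ)
    (hAd : ∀ (g h : G) (x : A),
      ρ g (ρ h x) = (↑(u g h) : A) * ρ (g * h) x * (↑((u g h)⁻¹) : A))
    (hAde : ∀ x : A, ρ (1 : G) x = (↑ue : A) * x * (↑(ue⁻¹) : A))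
    (hcoc : ∀ g h k : G,
      (↑(u g h) : A) * (↑(u (g * h) k) : A) = ρ g (↑(u h k) : A) * (↑(u g (h * k)) : A))
    (hue1 : ∀ g : G, (↑(u g 1) : A) = ρ g (↑ue : A))
    (hue2 : ∀ g : G, (↑(u 1 g) : A) = (↑ue : A))
    [FiniteDimensional K A] (θ : A →ₗ[K] K)
    (htr : ∀ a b : A, θ (a * b) = θ (b * a))
    (hnd : ∀ a : A, (∀ b : A, θ (a * b) = 0) → a = 0)
    (hGinv : ∀ (g : G) (a : A), θ (ρ g a) = θ a)
    (ξ₁ ξ₂ : ι → A)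
    (hξ : ∀ a : A, a = ∑ i, θ (a * ξ₂ i) • ξ₁ i)
    (hξsym : (∑ i, ξ₁ i ⊗ₜ[K] ξ₂ i) = ∑ i, ξ₂ i ⊗ₜ[K] ξ₁ i)
    (g h : G) (c : A) :
    ΔCom ρ u ξ₁ ξ₂ g h c -
        ∑ i, Tmap ρ u ue h (h⁻¹ * g * h) (ξ₂ i) ⊗ₜ[K]
          (c * (↑((u h (h⁻¹ * g * h))⁻¹) : A) * ρ h (ξ₁ i)) ∈
      leftTensor ρ g ⊔ rightTensor ρ h := by
  simp only [ΔCom, Tmap]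
  set k := h⁻¹ * g * h with hkdef
  have hhk : h * k = g * h := by rw [hkdef]; group
  set w : A := c * (↑((u g h)⁻¹) : A) with hw
  set E : A := (↑(ue⁻¹) : A) * (↑((u h h⁻¹)⁻¹) : A) with hE
  set cv : A := c * (↑((u h k)⁻¹) : A) with hcv
  set F' : A := (↑(u h k) : A) * (↑(u (h * k) h⁻¹) : A) with hF
  -- key cocycle identity
  have hkey : (↑(u (h * k) h⁻¹) : A) * ρ g E = (↑((u g h)⁻¹) : A) := by
    have hinv : h * h⁻¹ = (1 : G) := mul_inv_cancel h
    have hc := hcoc g h h⁻¹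
    rw [hinv, hue1 g] at hc
    have h2 : (↑(u g h) : A) *
        ((↑(u (g * h) h⁻¹) : A) * (ρ g (↑(ue⁻¹) : A) * ρ g (↑((u h h⁻¹)⁻¹) : A))) = 1 := by
      rw [← mul_assoc, hc]
      calc ρ g (↑(u h h⁻¹) : A) * ρ g (↑ue : A) *
            (ρ g (↑(ue⁻¹) : A) * ρ g (↑((u h h⁻¹)⁻¹) : A))
          = ρ g ((↑(u h h⁻¹) : A) * ((↑ue : A) * (↑(ue⁻¹) : A) * (↑((u h h⁻¹)⁻¹) : A))) := by
            simp only [map_mul, mul_assoc]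
        _ = 1 := by
            rw [Units.mul_inv, one_mul, Units.mul_inv, map_one]
    have h3 := congrArg (fun z => (↑((u g h)⁻¹) : A) * z) h2
    simp only [← mul_assoc, Units.inv_mul, one_mul, mul_one] at h3
    rw [hhk, hE, map_mul, ← mul_assoc]
    exact h3
  have hcvw : cv * (F' * ρ g E) = w := by
    rw [hcv, hF, hw]
    rw [mul_assoc, mul_assoc, Units.inv_mul_cancel_left, hkey]
  -- the chain of elements
  have m1 : (∑ i, (w * ρ g (ξ₁ i)) ⊗ₜ[K] ξ₂ i) - (∑ i, ρ g (ξ₁ i * w) ⊗ₜ[K] ξ₂ i)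
      ∈ leftTensor ρ g := by
    rw [← Finset.sum_sub_distrib]
    refine Submodule.sum_mem _ fun i _ => ?_
    rw [← TensorProduct.sub_tmul]
    refine mem_left' ρ g ?_ _
    rw [map_mul]
    exact gen_mem' ρ g w (ρ g (ξ₁ i))
  have m2 : (∑ i, ρ g (ξ₁ i * w) ⊗ₜ[K] ξ₂ i) - (∑ i, (ξ₁ i * w) ⊗ₜ[K] ξ₂ i)
      ∈ leftTensor ρ g := by
    rw [← Finset.sum_sub_distrib]
    refine Submodule.sum_mem _ fun i _ => ?_
    rw [← TensorProduct.sub_tmul]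
    exact mem_left' ρ g (gen_mem2' ρ g (ξ₁ i * w)) _
  have m3 : (∑ i, (E * ξ₁ i * F') ⊗ₜ[K] (cv * ξ₂ i))
      - (∑ i, (ξ₁ i * (F' * ρ g E)) ⊗ₜ[K] (cv * ξ₂ i)) ∈ leftTensor ρ g := by
    rw [← Finset.sum_sub_distrib]
    refine Submodule.sum_mem _ fun i _ => ?_
    rw [← TensorProduct.sub_tmul]
    refine mem_left' ρ g ?_ _
    have : E * ξ₁ i * F' - ξ₁ i * (F' * ρ g E)
        = E * (ξ₁ i * F') - (ξ₁ i * F') * ρ g E := by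
      rw [mul_assoc E (ξ₁ i) F', mul_assoc (ξ₁ i) F' ((ρ g) E)]
    rw [this]
    exact gen_mem' ρ g E (ξ₁ i * F')
  -- exact identities
  have hsym2 : ∑ i, ρ h (ξ₂ i) ⊗ₜ[K] ρ h (ξ₁ i) = ∑ i, ξ₁ i ⊗ₜ[K] ξ₂ i := by
    have hmap := congrArg
      (TensorProduct.map (ρ h).toLinearMap (ρ h).toLinearMap) hξsym.symm
    simp only [map_sum, TensorProduct.map_tmul, AlgEquiv.toLinearMap_apply] at hmap
    exact hmap.trans (casimirC3' ρ θ htr hGinv ξ₁ ξ₂ hξ hξsym h)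
  have e2 : (∑ i, (E * ρ h (ξ₂ i) * (↑(u h k) : A) * (↑(u (h * k) h⁻¹) : A))
        ⊗ₜ[K] (cv * ρ h (ξ₁ i)))
      = ∑ i, (E * ξ₁ i * F') ⊗ₜ[K] (cv * ξ₂ i) := by
    have hmm := congrArg (TensorProduct.map
      ((LinearMap.mulRight K F').comp (LinearMap.mulLeft K E))
      (LinearMap.mulLeft K cv)) hsym2
    simp only [map_sum, TensorProduct.map_tmul, LinearMap.comp_apply,
      LinearMap.mulLeft_apply, LinearMap.mulRight_apply] at hmm
    rw [← hmm]
    refine Finset.sum_congr rfl fun i _ => ?_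
    rw [hF]
    simp only [mul_assoc]
  have e1 : (∑ i, (ξ₁ i * w) ⊗ₜ[K] ξ₂ i)
      = ∑ i, (ξ₁ i * (F' * ρ g E)) ⊗ₜ[K] (cv * ξ₂ i) := by
    have hmm := congrArg (TensorProduct.map LinearMap.id (LinearMap.mulLeft K cv))
      (casimirC2' θ htr ξ₁ ξ₂ hξ hξsym (F' * ρ g E))
    simp only [map_sum, TensorProduct.map_tmul, LinearMap.id_apply,
      LinearMap.mulLeft_apply] at hmm
    rw [hmm]
    rw [casimirC2' θ htr ξ₁ ξ₂ hξ hξsym w]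
    refine Finset.sum_congr rfl fun i _ => ?_
    rw [← mul_assoc, hcvw]
  -- assemble
  apply Submodule.mem_sup_left
  rw [e2]
  have hsplit : (∑ i, (w * ρ g (ξ₁ i)) ⊗ₜ[K] ξ₂ i)
        - (∑ i, (E * ξ₁ i * F') ⊗ₜ[K] (cv * ξ₂ i))
      = ((∑ i, (w * ρ g (ξ₁ i)) ⊗ₜ[K] ξ₂ i) - ∑ i, ρ g (ξ₁ i * w) ⊗ₜ[K] ξ₂ i)
        + ((∑ i, ρ g (ξ₁ i * w) ⊗ₜ[K] ξ₂ i) - ∑ i, (ξ₁ i * w) ⊗ₜ[K] ξ₂ i)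
        + -((∑ i, (E * ξ₁ i * F') ⊗ₜ[K] (cv * ξ₂ i))
            - ∑ i, (ξ₁ i * (F' * ρ g E)) ⊗ₜ[K] (cv * ξ₂ i)) := by
    rw [← e1]
    abel
  rw [hsplit]
  exact add_mem (add_mem m1 m2) (neg_mem m3)
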